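/- Let G be a connected, locally finite, vertex-transitive graph of polynomial growth, and let Γ ≤ Aut(G) be a subgroup acting transitively on the vertices of G with finite vertex stabilizers, containing a normal nilpotent subgroup N ⊴ Γ of finite index. Then there exists a finite normal subgroup H ⊴ Γ such that the image of N in Γ_{G/H} acts freely on the vertex set of the quotient graph G/H. -/

import Mathlib

set_option linter.unusedVariables false

universe u

namespace PercAux

open scoped commutatorElement

open Subgroup

/-- A subgroup with finite carrier is finitely generated. -/
lemma fg_of_finite_carrier {G : Type u} [Group G] {H : Subgroup G} (h : (H : Set G).Finite) :
    H.FG :=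
  (Subgroup.fg_iff H).2 ⟨H, Subgroup.closure_eq H, h⟩

/-- Lifting generators: if the image of `H` under `f` is f.g., there is a finite subset of `H`
which generates `H` together with the kernel. -/
lemma exists_lift_gens {G Q : Type*} [Group G] [Group Q] (f : G →* Q) (H : Subgroup G)
    (h1 : (H.map f).FG) :
    ∃ X : Set G, X.Finite ∧ X ⊆ H ∧ H ≤ Subgroup.closure (X ∪ (f.ker : Set G)) := by
  obtain ⟨E, hE, hEfin⟩ := (Subgroup.fg_iff _).1 h1
  have hEmem : ∀ e : E, ∃ x, x ∈ H ∧ f x = (e : Q) := by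
    rintro ⟨e, he⟩
    have : e ∈ H.map f := hE ▸ Subgroup.subset_closure he
    obtain ⟨x, hx, hfx⟩ := this
    exact ⟨x, hx, hfx⟩
  choose x hxH hxf using hEmem
  haveI : Finite E := hEfin.to_subtype
  refine ⟨Set.range x, Set.finite_range x, ?_, ?_⟩
  · rintro _ ⟨e, rfl⟩; exact hxH e
  · intro h hh
    have himg : f '' Set.range x = E := by
      ext q
      constructor
      · rintro ⟨_, ⟨e, rfl⟩, rfl⟩; rw [hxf e]; exact e.2
      · intro hq; exact ⟨x ⟨q, hq⟩, ⟨⟨q, hq⟩, rfl⟩, hxf _⟩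
    have : f h ∈ Subgroup.map f (Subgroup.closure (Set.range x)) := by
      rw [MonoidHom.map_closure, himg, hE]
      exact Subgroup.mem_map_of_mem f hh
    obtain ⟨y, hy, hyf⟩ := this
    have hker : y⁻¹ * h ∈ f.ker := by
      rw [MonoidHom.mem_ker, map_mul, map_inv, hyf]
      simp
    have h1' : y ∈ Subgroup.closure (Set.range x ∪ (f.ker : Set G)) :=
      Subgroup.closure_mono Set.subset_union_left hy
    have h2' : y⁻¹ * h ∈ Subgroup.closure (Set.range x ∪ (f.ker : Set G)) :=
      Subgroup.subset_closure (Set.mem_union_right _ hker)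
    have := mul_mem h1' h2'
    simpa using this

/-- Extension of f.g. by f.g. is f.g. -/
lemma fg_ext {G Q : Type*} [Group G] [Group Q] (f : G →* Q) (H : Subgroup G)
    (hker : f.ker ≤ H) (h1 : (H.map f).FG) (h2 : f.ker.FG) : H.FG := by
  obtain ⟨X, hXfin, hXH, hXgen⟩ := exists_lift_gens f H h1
  obtain ⟨K, hK, hKfin⟩ := (Subgroup.fg_iff _).1 h2
  refine (Subgroup.fg_iff H).2 ⟨X ∪ K, ?_, hXfin.union hKfin⟩
  have hle : Subgroup.closure (X ∪ K) ≤ H := by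
    rw [Subgroup.closure_le]
    refine Set.union_subset hXH ?_
    intro k hk
    apply hker
    rw [← hK]
    exact Subgroup.subset_closure hk
  have hge : H ≤ Subgroup.closure (X ∪ K) := by
    refine le_trans hXgen ?_
    rw [Subgroup.closure_le]
    refine Set.union_subset ?_ ?_
    · exact subset_trans Set.subset_union_left Subgroup.subset_closure
    · intro k hk
      have hk' : k ∈ Subgroup.closure K := by rw [hK]; exact hk
      exact Subgroup.closure_mono Set.subset_union_right hk'
  exact le_antisymm hle hge

lemma lcs_map_surj {G Q : Type*} [Group G] [Group Q] (f : G →* Q)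
    (hf : Function.Surjective f) (n : ℕ) :
    (Subgroup.lowerCentralSeries (⊤ : Subgroup G) n).map f = Subgroup.lowerCentralSeries (⊤ : Subgroup Q) n := by
  induction n with
  | zero => simpa using Subgroup.map_top_of_surjective f hf
  | succ n ih =>
      show Subgroup.map f ⁅Subgroup.lowerCentralSeries (⊤ : Subgroup G) n, ⊤⁆ = ⁅Subgroup.lowerCentralSeries (⊤ : Subgroup Q) n, ⊤⁆
      rw [Subgroup.map_commutator, ih, Subgroup.map_top_of_surjective f hf]

lemma normal_of_le_center {M : Type*} [Group M] {A : Subgroup M}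
    (h : A ≤ Subgroup.center M) : A.Normal := by
  constructor
  intro a ha g
  have := (Subgroup.mem_center_iff.1 (h ha)) g
  rw [this, mul_assoc]
  simpa using ha

open Subgroup

variable {G : Type*} [Group G]

lemma comm_mul_central_left {z : G} (hz : z ∈ Subgroup.center G) (a b : G) :
    ⁅a * z, b⁆ = ⁅a, b⁆ := by
  have hzb : z * b = b * z := ((Subgroup.mem_center_iff.1 hz) b).symm
  rw [commutatorElement_def, commutatorElement_def]
  calc a * z * b * (a * z)⁻¹ * b⁻¹ = a * (z * b) * z⁻¹ * a⁻¹ * b⁻¹ := by group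
    _ = a * (b * z) * z⁻¹ * a⁻¹ * b⁻¹ := by rw [hzb]
    _ = a * b * a⁻¹ * b⁻¹ := by group

lemma comm_mul_central_right {w : G} (hw : w ∈ Subgroup.center G) (a b : G) :
    ⁅a, b * w⁆ = ⁅a, b⁆ := by
  have hwa : w * a⁻¹ = a⁻¹ * w := ((Subgroup.mem_center_iff.1 hw) a⁻¹).symm
  rw [commutatorElement_def, commutatorElement_def]
  calc a * (b * w) * a⁻¹ * (b * w)⁻¹ = a * b * (w * a⁻¹) * w⁻¹ * b⁻¹ := by group
    _ = a * b * (a⁻¹ * w) * w⁻¹ * b⁻¹ := by rw [hwa]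
    _ = a * b * a⁻¹ * b⁻¹ := by group

/-- right-homomorphism property of commutator when values are central -/
lemma comm_mul_right_of_central {x : G}
    (hc : ∀ g : G, ⁅x, g⁆ ∈ Subgroup.center G) (g h : G) :
    ⁅x, g * h⁆ = ⁅x, g⁆ * ⁅x, h⁆ := by
  have key : ⁅x, g * h⁆ = ⁅x, g⁆ * (g * ⁅x, h⁆ * g⁻¹) := by
    rw [commutatorElement_def, commutatorElement_def, commutatorElement_def]
    group
  rw [key, (Subgroup.mem_center_iff.1 (hc h) g)]
  group

lemma comm_mul_left_of_central {x y : G}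
    (hcx : ∀ g : G, ⁅x, g⁆ ∈ Subgroup.center G)
    (hcy : ∀ g : G, ⁅y, g⁆ ∈ Subgroup.center G) (g : G) :
    ⁅x * y, g⁆ = ⁅y, g⁆ * ⁅x, g⁆ := by
  have key : ⁅x * y, g⁆ = (x * ⁅y, g⁆ * x⁻¹) * ⁅x, g⁆ := by
    rw [commutatorElement_def, commutatorElement_def, commutatorElement_def]
    group
  rw [key, (Subgroup.mem_center_iff.1 (hcy g) x)]
  group

lemma comm_inv_right_of_central {x : G}
    (hc : ∀ g : G, ⁅x, g⁆ ∈ Subgroup.center G) (g : G) :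
    ⁅x, g⁻¹⁆ = ⁅x, g⁆⁻¹ := by
  have h0 := comm_mul_right_of_central hc g g⁻¹
  rw [mul_inv_cancel, commutatorElement_one_right] at h0
  exact eq_inv_of_mul_eq_one_right h0.symm

lemma commutator_top_fg (Hs : Subgroup G) (X Y Z : Set G)
    (hXfin : X.Finite) (hYfin : Y.Finite)
    (hXH : X ⊆ Hs) (hZH : Z ⊆ Hs) (hZc : Z ⊆ Subgroup.center G)
    (hY : Subgroup.closure Y = ⊤)
    (hcent : ∀ x ∈ Hs, ∀ g : G, ⁅x, g⁆ ∈ Subgroup.center G)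
    (hH : Hs ≤ Subgroup.closure (X ∪ Z)) :
    ⁅Hs, (⊤ : Subgroup G)⁆.FG := by
  classical
  set C : Set G := Set.image2 (fun x g => ⁅x, g⁆) X Y with hC
  set F : Subgroup G := Subgroup.closure C with hF
  -- step 1: for x ∈ Hs with generators ok, all g ok
  have step1 : ∀ x ∈ Hs, (∀ g ∈ Y, ⁅x, g⁆ ∈ F) → ∀ g : G, ⁅x, g⁆ ∈ F := by
    intro x hx hgen g
    let D : Subgroup G :=
      { carrier := {g : G | ⁅x, g⁆ ∈ F}
        one_mem' := by
          simp only [Set.mem_setOf_eq, commutatorElement_one_right]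
          exact one_mem F
        mul_mem' := by
          intro a b ha hb
          simp only [Set.mem_setOf_eq] at *
          rw [comm_mul_right_of_central (hcent x hx)]
          exact mul_mem ha hb
        inv_mem' := by
          intro a ha
          simp only [Set.mem_setOf_eq] at *
          rw [comm_inv_right_of_central (hcent x hx)]
          exact inv_mem ha }
    have : (⊤ : Subgroup G) ≤ D := by
      rw [← hY, Subgroup.closure_le]
      exact hgen
    exact this (Subgroup.mem_top g)
  -- step 2: the set of x ∈ Hs with all commutators in F is a subgroup
  let E : Subgroup G :=
    { carrier := {x : G | x ∈ Hs ∧ ∀ g : G, ⁅x, g⁆ ∈ F}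
      one_mem' := ⟨one_mem Hs, fun g => by
        rw [commutatorElement_one_left]; exact one_mem F⟩
      mul_mem' := by
        rintro a b ⟨haH, ha⟩ ⟨hbH, hb⟩
        refine ⟨mul_mem haH hbH, fun g => ?_⟩
        rw [comm_mul_left_of_central (hcent a haH) (hcent b hbH)]
        exact mul_mem (hb g) (ha g)
      inv_mem' := by
        rintro a ⟨haH, ha⟩
        refine ⟨inv_mem haH, fun g => ?_⟩
        have h1 : ⁅a * a⁻¹, g⁆ = ⁅a⁻¹, g⁆ * ⁅a, g⁆ :=
          comm_mul_left_of_central (hcent a haH) (hcent a⁻¹ (inv_mem haH)) g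
        rw [mul_inv_cancel, commutatorElement_one_left] at h1
        have : ⁅a⁻¹, g⁆ = ⁅a, g⁆⁻¹ := by
          have h2 : ⁅a⁻¹, g⁆ * ⁅a, g⁆ = 1 := h1.symm
          calc ⁅a⁻¹, g⁆ = ⁅a⁻¹, g⁆ * (⁅a, g⁆ * ⁅a, g⁆⁻¹) := by rw [mul_inv_cancel, mul_one]
            _ = (⁅a⁻¹, g⁆ * ⁅a, g⁆) * ⁅a, g⁆⁻¹ := by rw [mul_assoc]
            _ = ⁅a, g⁆⁻¹ := by rw [h2, one_mul]
        rw [this]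
        exact inv_mem (ha g) }
  have hXE : X ⊆ E := by
    intro x hx
    refine ⟨hXH hx, step1 x (hXH hx) (fun g hg => ?_)⟩
    exact Subgroup.subset_closure (Set.mem_image2_of_mem hx hg)
  have hZE : Z ⊆ E := by
    intro z hz
    refine ⟨hZH hz, fun g => ?_⟩
    have : ⁅z, g⁆ = 1 := by
      rw [commutatorElement_eq_one_iff_commute]
      exact ((Subgroup.mem_center_iff.1 (hZc hz)) g).symm
    rw [this]; exact one_mem F
  have hHsE : Hs ≤ E := by
    refine le_trans hH ?_
    rw [Subgroup.closure_le]
    exact Set.union_subset hXE hZE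
  -- conclude
  have heq : ⁅Hs, (⊤ : Subgroup G)⁆ = F := by
    apply le_antisymm
    · rw [Subgroup.commutator_le]
      intro g₁ h₁ g₂ _
      exact (hHsE h₁).2 g₂
    · rw [hF, Subgroup.closure_le]
      rintro _ ⟨x, hx, g, hg, rfl⟩
      exact Subgroup.commutator_mem_commutator (hXH hx) (Subgroup.mem_top g)
  rw [heq]
  exact (Subgroup.fg_iff F).2 ⟨C, rfl, Set.Finite.image2 _ hXfin hYfin⟩


lemma map_mk'_self {G : Type*} [Group G] (A : Subgroup G) [A.Normal] :
    A.map (QuotientGroup.mk' A) = ⊥ := by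
  rw [eq_bot_iff]
  rintro q ⟨a, ha, rfl⟩
  simp only [Subgroup.mem_bot]
  exact (QuotientGroup.eq_one_iff a).2 ha

/-- All terms of the lower central series of a f.g. nilpotent group are finitely generated. -/
lemma lcs_fg (c : ℕ) : ∀ (G : Type u) [Group G], Group.FG G → Subgroup.lowerCentralSeries (⊤ : Subgroup G) c = ⊥ →
    ∀ k : ℕ, (Subgroup.lowerCentralSeries (⊤ : Subgroup G) k).FG := by
  induction c with
  | zero =>
    intro G _ hfg hc k
    have : Subgroup.lowerCentralSeries (⊤ : Subgroup G) k = ⊥ := by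
      rw [eq_bot_iff, ← hc]
      exact Subgroup.lowerCentralSeries_antitone _ (Nat.zero_le k)
    rw [this]
    exact fg_of_finite_carrier (by simp)
  | succ c ih =>
    intro G _ hfg hc k
    -- A := lcs G c is central
    set A : Subgroup G := Subgroup.lowerCentralSeries (⊤ : Subgroup G) c with hA
    have hAcent : A ≤ Subgroup.center G := by
      intro a ha
      rw [Subgroup.mem_center_iff]
      intro g
      have : ⁅a, g⁆ ∈ Subgroup.lowerCentralSeries (⊤ : Subgroup G) (c + 1) :=
        Subgroup.commutator_mem_commutator ha (Subgroup.mem_top g)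
      rw [hc, Subgroup.mem_bot, commutatorElement_eq_one_iff_commute] at this
      exact this.symm
    haveI : A.Normal := Subgroup.lowerCentralSeries_normal ⊤ c
    set π := QuotientGroup.mk' A with hπ
    have hπs : Function.Surjective π := QuotientGroup.mk'_surjective A
    have hQfg : Group.FG (G ⧸ A) := Group.fg_of_surjective (f := π) hπs
    have hQc : Subgroup.lowerCentralSeries (⊤ : Subgroup (G ⧸ A)) c = ⊥ := by
      rw [← lcs_map_surj π hπs c, ← hA, map_mk'_self]
    have hQ := ih (G ⧸ A) hQfg hQc
    -- A is f.g.
    have hAfg : A.FG := by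
      rcases c with _ | c'
      · -- A = ⊤
        have : A = ⊤ := rfl
        rw [this, ← Group.fg_def]
        exact hfg
      · -- A = ⁅lcs G c', ⊤⁆
        set Hs := Subgroup.lowerCentralSeries (⊤ : Subgroup G) c' with hHs
        obtain ⟨X, hXfin, hXH, hXgen⟩ := exists_lift_gens π Hs (by
          rw [lcs_map_surj π hπs c']
          exact hQ c')
        obtain ⟨Y, hYtop, hYfin⟩ := Group.fg_iff.1 hfg
        have hAHs : A ≤ Hs := Subgroup.lowerCentralSeries_antitone _ (Nat.le_succ c')
        have : ⁅Hs, (⊤ : Subgroup G)⁆.FG := by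
          refine commutator_top_fg Hs X Y (A : Set G) hXfin hYfin hXH hAHs hAcent hYtop ?_ ?_
          · intro x hx g
            refine hAcent ?_
            exact Subgroup.commutator_mem_commutator hx (Subgroup.mem_top g)
          · have : π.ker = A := QuotientGroup.ker_mk' A
            rw [← this]
            exact hXgen
        exact this
    -- now conclude for every k
    rcases le_or_gt k c with hk | hk
    · refine fg_ext π (Subgroup.lowerCentralSeries (⊤ : Subgroup G) k) ?_ ?_ ?_
      · rw [QuotientGroup.ker_mk']
        exact Subgroup.lowerCentralSeries_antitone _ hk
      · rw [lcs_map_surj π hπs k]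
        exact hQ k
      · rw [QuotientGroup.ker_mk']
        exact hAfg
    · have : Subgroup.lowerCentralSeries (⊤ : Subgroup G) k = ⊥ := by
        rw [eq_bot_iff, ← hc]
        exact Subgroup.lowerCentralSeries_antitone _ hk
      rw [this]
      exact fg_of_finite_carrier (by simp)


/-- the torsion elements of a f.g. commutative group form a finite set -/
lemma torsion_finite_of_comm_fg (C : Type u) [CommGroup C] [hfg : Group.FG C] :
    {c : C | IsOfFinOrder c}.Finite := by
  set T := CommGroup.torsion C with hT
  haveI : Module.Finite ℤ (Additive C) :=
    Module.Finite.iff_addGroup_fg.mpr AddGroup.fg_of_group_fg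
  haveI : IsNoetherian ℤ (Additive C) :=
    isNoetherian_of_isNoetherianRing_of_finite ℤ (Additive C)
  have hTfg : T.FG := by
    have h1 : (AddSubgroup.toIntSubmodule T.toAddSubgroup).FG := IsNoetherian.noetherian _
    have h2 : T.toAddSubgroup.FG := by
      rw [← AddSubgroup.toIntSubmodule_toAddSubgroup T.toAddSubgroup]
      exact (Submodule.fg_iff_addSubgroup_fg _).1 h1
    exact (Subgroup.fg_iff_add_fg T).2 h2
  haveI : Group.FG ↥T := (Group.fg_iff_subgroup_fg T).2 hTfg
  have htor : Monoid.IsTorsion ↥T := by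
    intro x
    have h2 : orderOf (x : C) ≠ 0 := by
      intro h0
      exact (orderOf_eq_zero_iff.1 h0) x.2
    rw [Subgroup.orderOf_coe] at h2
    by_contra h
    exact h2 (orderOf_eq_zero_iff.2 h)
  haveI : Finite ↥T := CommGroup.finite_of_fg_torsion ↥T htor
  have hset : {c : C | IsOfFinOrder c} = (T : Set C) := rfl
  rw [hset]
  exact Set.toFinite _

/-- key step : a group which is finite-by-(f.g. central) has its torsion contained in a
finite subgroup. -/
lemma key_step (M : Type u) [Group M] (A : Subgroup M) (hA : A ≤ Subgroup.center M)
    (hAfg : A.FG) (hfin : Finite (M ⧸ A)) :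
    ∃ F : Subgroup M, (F : Set M).Finite ∧ ∀ m : M, IsOfFinOrder m → m ∈ F := by
  haveI : A.Normal := normal_of_le_center hA
  haveI hMfg : Group.FG M := by
    rw [Group.fg_def]
    refine fg_ext (QuotientGroup.mk' A) ⊤ le_top ?_ ?_
    · rw [Subgroup.map_top_of_surjective _ (QuotientGroup.mk'_surjective A), ← Group.fg_def]
      exact Group.fg_of_finite
    · rw [QuotientGroup.ker_mk']; exact hAfg
  have hcs : (commutatorSet M).Finite := by
    have hsub : commutatorSet M ⊆
        (fun p : (M ⧸ A) × (M ⧸ A) => ⁅Quotient.out p.1, Quotient.out p.2⁆) '' Set.univ := by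
      rintro x ⟨a, b, rfl⟩
      refine ⟨(QuotientGroup.mk a, QuotientGroup.mk b), Set.mem_univ _, ?_⟩
      obtain ⟨z, hz⟩ := QuotientGroup.mk_out_eq_mul A a
      obtain ⟨w, hw⟩ := QuotientGroup.mk_out_eq_mul A b
      simp only
      rw [hz, hw, comm_mul_central_left (hA z.2), comm_mul_central_right (hA w.2)]
    exact (Set.finite_univ.image _).subset hsub
  haveI : Finite (commutatorSet M) := hcs.to_subtype
  haveI hFC : Finite (_root_.commutator M) := inferInstance
  set φ : M →* Abelianization M := Abelianization.of with hφ
  have hφs : Function.Surjective φ := by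
    intro q
    obtain ⟨x, hx⟩ := QuotientGroup.mk'_surjective (_root_.commutator M) q
    exact ⟨x, hx⟩
  have hkerφ : φ.ker = _root_.commutator M := by
    apply le_antisymm
    · intro x hx
      have hx1 : (QuotientGroup.mk x : M ⧸ _root_.commutator M) = 1 := hx
      exact (QuotientGroup.eq_one_iff x).1 hx1
    · exact Abelianization.commutator_subset_ker φ
  haveI : Group.FG (Abelianization M) := Group.fg_of_surjective hφs
  have hTfin := torsion_finite_of_comm_fg (Abelianization M)
  set F : Subgroup M := (CommGroup.torsion (Abelianization M)).comap φ with hF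
  refine ⟨F, ?_, ?_⟩
  · have hsub : (F : Set M) ⊆
        ⋃ t ∈ {c : Abelianization M | IsOfFinOrder c}, {m : M | φ m = t} := by
      intro m hm
      exact Set.mem_biUnion hm rfl
    refine (Set.Finite.biUnion hTfin ?_).subset hsub
    intro t _
    by_cases hne : ∃ m₀ : M, φ m₀ = t
    · obtain ⟨m₀, hm₀⟩ := hne
      have : {m : M | φ m = t} ⊆ (fun c => m₀ * c) '' (φ.ker : Set M) := by
        intro m hm
        refine ⟨m₀⁻¹ * m, ?_, by group⟩
        have : φ (m₀⁻¹ * m) = 1 := by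
          rw [map_mul, map_inv, hm₀, hm]
          simp
        exact this
      refine (Set.Finite.image _ ?_).subset this
      rw [hkerφ]
      exact Set.toFinite _
    · have : {m : M | φ m = t} = ∅ := by
        ext m; simp only [Set.mem_setOf_eq, Set.mem_empty_iff_false, iff_false]
        exact fun hc => hne ⟨m, hc⟩
      rw [this]; exact Set.finite_empty
  · intro m hm
    exact Subgroup.mem_comap.2 (φ.isOfFinOrder hm)


/-- main induction: in a f.g. nilpotent group, all torsion elements lie in a finite subgroup -/
lemma torsion_in_finite_subgroup (c : ℕ) :
    ∀ (M : Type u) [Group M], Group.FG M → Subgroup.lowerCentralSeries (⊤ : Subgroup M) c = ⊥ →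
    ∃ F : Subgroup M, (F : Set M).Finite ∧ ∀ m : M, IsOfFinOrder m → m ∈ F := by
  induction c with
  | zero =>
    intro M _ _ hc
    refine ⟨⊤, ?_, fun m _ => Subgroup.mem_top m⟩
    have hsub : Subsingleton M := by
      constructor
      intro a b
      have ha : a ∈ (⊥ : Subgroup M) := hc ▸ Subgroup.mem_top a
      have hb : b ∈ (⊥ : Subgroup M) := hc ▸ Subgroup.mem_top b
      rw [Subgroup.mem_bot] at ha hb; rw [ha, hb]
    haveI := hsub
    haveI : Finite M := Finite.of_subsingleton
    exact Set.toFinite _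
  | succ c ih =>
    intro M _ hfg hc
    set A : Subgroup M := Subgroup.lowerCentralSeries (⊤ : Subgroup M) c with hA
    have hAcent : A ≤ Subgroup.center M := by
      intro a ha
      rw [Subgroup.mem_center_iff]
      intro g
      have : ⁅a, g⁆ ∈ Subgroup.lowerCentralSeries (⊤ : Subgroup M) (c + 1) :=
        Subgroup.commutator_mem_commutator ha (Subgroup.mem_top g)
      rw [hc, Subgroup.mem_bot, commutatorElement_eq_one_iff_commute] at this
      exact this.symm
    haveI : A.Normal := Subgroup.lowerCentralSeries_normal ⊤ c
    set π := QuotientGroup.mk' A with hπ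
    have hπs : Function.Surjective π := QuotientGroup.mk'_surjective A
    have hQfg : Group.FG (M ⧸ A) := Group.fg_of_surjective (f := π) hπs
    have hQc : Subgroup.lowerCentralSeries (⊤ : Subgroup (M ⧸ A)) c = ⊥ := by
      rw [← lcs_map_surj π hπs c, ← hA, map_mk'_self]
    obtain ⟨F', hF'fin, hF'tor⟩ := ih (M ⧸ A) hQfg hQc
    have hAfg : A.FG := lcs_fg (c+1) M hfg hc c
    set M' : Subgroup M := F'.comap π with hM'
    have hAM' : A ≤ M' := by
      intro a ha
      have h1 : π a = 1 := (QuotientGroup.eq_one_iff a).2 ha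
      have : π a ∈ F' := by rw [h1]; exact one_mem F'
      exact Subgroup.mem_comap.2 this
    -- hypotheses of key_step for ↥M'
    have hA'c : A.subgroupOf M' ≤ Subgroup.center ↥M' := by
      rintro ⟨a, haM⟩ ha
      rw [Subgroup.mem_subgroupOf] at ha
      rw [Subgroup.mem_center_iff]
      intro g
      exact Subtype.ext ((Subgroup.mem_center_iff.1 (hAcent ha)) (g : M))
    have hA'fg : (A.subgroupOf M').FG := by
      haveI : Group.FG ↥A := (Group.fg_iff_subgroup_fg A).2 hAfg
      haveI : Group.FG ↥(A.subgroupOf M') :=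
        Group.fg_of_surjective (f := (Subgroup.subgroupOfEquivOfLe hAM').symm.toMonoidHom)
          (Subgroup.subgroupOfEquivOfLe hAM').symm.surjective
      exact (Group.fg_iff_subgroup_fg _).1 this
    -- finiteness of the quotient
    have hmem : ∀ x : ↥M', (π.domRestrict M') x ∈ F' := by
      rintro ⟨x, hx⟩
      exact Subgroup.mem_comap.1 hx
    set φ2 : ↥M' →* ↥F' := (π.domRestrict M').codRestrict F' hmem with hφ2
    have hφ2s : Function.Surjective φ2 := by
      rintro ⟨q, hq⟩
      obtain ⟨m, hm⟩ := hπs q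
      have hmM' : m ∈ M' := Subgroup.mem_comap.2 (by rw [hm]; exact hq)
      refine ⟨⟨m, hmM'⟩, ?_⟩
      apply Subtype.ext
      exact hm
    have hker2 : φ2.ker = A.subgroupOf M' := by
      ext x
      rw [MonoidHom.mem_ker, Subgroup.mem_subgroupOf]
      constructor
      · intro h
        have h1 : π (x : M) = 1 := congrArg Subtype.val h
        exact (QuotientGroup.eq_one_iff _).1 h1
      · intro h
        exact Subtype.ext ((QuotientGroup.eq_one_iff (x : M)).2 h)
    haveI : Finite ↥F' := hF'fin.to_subtype
    have hfinq : Finite (↥M' ⧸ A.subgroupOf M') := by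
      rw [← hker2]
      exact Finite.of_equiv ↥F' (QuotientGroup.quotientKerEquivOfSurjective φ2 hφ2s).symm.toEquiv
    haveI := hfinq
    obtain ⟨F₀, hF₀fin, hF₀tor⟩ := key_step ↥M' (A.subgroupOf M') hA'c hA'fg hfinq
    refine ⟨F₀.map M'.subtype, ?_, ?_⟩
    · rw [Subgroup.coe_map]
      exact hF₀fin.image _
    · intro m hm
      have hπm : π m ∈ F' := hF'tor (π m) (π.isOfFinOrder hm)
      have hmM' : m ∈ M' := Subgroup.mem_comap.2 hπm
      have htor' : IsOfFinOrder (⟨m, hmM'⟩ : ↥M') := by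
        obtain ⟨n, hn, hpow⟩ := isOfFinOrder_iff_pow_eq_one.1 hm
        exact isOfFinOrder_iff_pow_eq_one.2 ⟨n, hn, Subtype.ext (by simpa using hpow)⟩
      exact ⟨⟨m, hmM'⟩, hF₀tor _ htor', rfl⟩


lemma torsion_in_finite_subgroup' (M : Type u) [Group M] (hfg : Group.FG M)
    (hnil : Group.IsNilpotent M) :
    ∃ F : Subgroup M, (F : Set M).Finite ∧ ∀ m : M, IsOfFinOrder m → m ∈ F := by
  obtain ⟨c, hc⟩ := Subgroup.nilpotent_iff_lowerCentralSeries.1 hnil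
  exact torsion_in_finite_subgroup c M hfg hc

lemma closure_normal_of_conj {Γ : Type*} [Group Γ] {S : Set Γ}
    (h : ∀ g : Γ, ∀ s ∈ S, g * s * g⁻¹ ∈ S) : (Subgroup.closure S).Normal := by
  constructor
  intro n hn g
  have hmap : Subgroup.map (MulAut.conj g).toMonoidHom (Subgroup.closure S) ≤
      Subgroup.closure S := by
    rw [MonoidHom.map_closure, Subgroup.closure_le]
    rintro _ ⟨s, hs, rfl⟩
    have : (MulAut.conj g).toMonoidHom s = g * s * g⁻¹ := rfl
    rw [this]
    exact Subgroup.subset_closure (h g s hs)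
  have : (MulAut.conj g).toMonoidHom n ∈ Subgroup.map (MulAut.conj g).toMonoidHom
      (Subgroup.closure S) := ⟨n, hn, rfl⟩
  exact hmap this

end PercAux



namespace PercStmt

variable {V : Type*}

/-- A graph is vertex-transitive if any vertex can be mapped to any other by an automorphism. -/
def VertexTransitive (G : SimpleGraph V) : Prop :=
  ∀ u v : V, ∃ φ : G ≃g G, φ u = v

/-- `β_G(r)`: the number of vertices at distance at most `r` from `v`. -/
noncomputable def ballCard (G : SimpleGraph V) (v : V) (r : ℕ) : ℕ :=
  Nat.card {u : V | G.Reachable v u ∧ G.dist v u ≤ r}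

/-- Polynomial growth: `β_G(n) ≤ C n^d` for some `C, d > 0`. -/
def PolyGrowth (G : SimpleGraph V) (v : V) : Prop :=
  ∃ C d : ℝ, 0 < C ∧ 0 < d ∧ ∀ n : ℕ, 0 < n → (ballCard G v n : ℝ) ≤ C * (n : ℝ) ^ d

variable {Γ : Type*} [Group Γ] [MulAction Γ V]

/-- The kernel of the action of `Γ` on the set of `H`-orbits of `V`; the quotient
`Γ ⧸ actionKernel V Γ H` is the image `Γ_{G/H}` of `Γ` in the symmetry group of `G/H`. -/
def actionKernel (V : Type*) (Γ : Type*) [Group Γ] [MulAction Γ V] (H : Subgroup Γ) :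
    Subgroup Γ where
  carrier := {g : Γ | ∀ v : V,
    Quotient.mk (MulAction.orbitRel H V) (g • v) = Quotient.mk (MulAction.orbitRel H V) v}
  one_mem' := by intro v; rw [one_smul]
  mul_mem' := by
    intro a b ha hb v
    rw [mul_smul, ha (b • v), hb v]
  inv_mem' := by
    intro a ha v
    have h := ha (a⁻¹ • v)
    rw [smul_inv_smul] at h
    exact h.symm


/-- Let `G` be a connected, locally finite, vertex-transitive graph of
polynomial growth, and let `Γ ≤ Aut(G)` act transitively with finite vertex stabilizers,
containing a normal nilpotent subgroup `N` of finite index.  Then there is a finite normal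
subgroup `H ⊴ Γ` such that the image of `N` in `Γ_{G/H} = Γ ⧸ actionKernel V Γ H` acts
freely on the set of `H`-orbits (the vertex set of `G/H`). -/
theorem stmt6 {V Γ : Type*} [Group Γ] [MulAction Γ V] (G : SimpleGraph V) (v₀ : V)
    (hconn : G.Connected) (hlf : G.LocallyFinite)
    (htransG : VertexTransitive G)
    (hfaithful : ∀ g : Γ, (∀ v : V, g • v = v) → g = 1)
    (haut : ∀ (g : Γ) (u v : V), G.Adj (g • u) (g • v) ↔ G.Adj u v)
    (htrans : ∀ u v : V, ∃ g : Γ, g • u = v)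
    (hstab : ∀ v : V, {g : Γ | g • v = v}.Finite)
    (hpoly : PolyGrowth G v₀)
    (N : Subgroup Γ) (hNnormal : N.Normal) (hNnilp : Group.IsNilpotent N)
    (hNfi : N.FiniteIndex) :
    ∃ (H : Subgroup Γ), H.Normal ∧ (H : Set Γ).Finite ∧
      ∃ hK : (actionKernel V Γ H).Normal,
        letI := hK
        ∀ x : Γ ⧸ actionKernel V Γ H,
          x ∈ Subgroup.map (QuotientGroup.mk' (actionKernel V Γ H)) N →
          (∃ g : Γ, (QuotientGroup.mk g : Γ ⧸ actionKernel V Γ H) = x ∧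
            ∃ v : V, Quotient.mk (MulAction.orbitRel H V) (g • v) =
              Quotient.mk (MulAction.orbitRel H V) v) →
          x = 1 := by
  classical
  -- Γ is finitely generated (geometric argument)
  have hΓfg : Group.FG Γ := by
    set S : Set Γ := {g : Γ | g • v₀ = v₀ ∨ G.Adj v₀ (g • v₀)} with hS
    have hstabfin : ∀ u : V, {g : Γ | g • v₀ = u}.Finite := by
      intro u
      by_cases hne : ∃ g₀ : Γ, g₀ • v₀ = u
      · obtain ⟨g₀, hg₀⟩ := hne
        have hsub : {g : Γ | g • v₀ = u} ⊆ (fun k => g₀ * k) '' {k : Γ | k • v₀ = v₀} := by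
          intro g hg
          refine ⟨g₀⁻¹ * g, ?_, by group⟩
          show (g₀⁻¹ * g) • v₀ = v₀
          rw [mul_smul, hg, ← hg₀, inv_smul_smul]
        exact ((hstab v₀).image _).subset hsub
      · have hempty : {g : Γ | g • v₀ = u} = ∅ := by
          ext g
          simp only [Set.mem_setOf_eq, Set.mem_empty_iff_false, iff_false]
          exact fun hc => hne ⟨g, hc⟩
        rw [hempty]
        exact Set.finite_empty
    have hSfin : S.Finite := by
      have hsub : S ⊆ ⋃ u ∈ insert v₀ (G.neighborSet v₀), {g : Γ | g • v₀ = u} := by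
        rintro g (hg | hg)
        · exact Set.mem_biUnion (Set.mem_insert _ _) hg
        · exact Set.mem_biUnion
            (Set.mem_insert_of_mem _ ((SimpleGraph.mem_neighborSet G v₀ (g • v₀)).2 hg)) rfl
      refine (Set.Finite.biUnion ?_ (fun u _ => hstabfin u)).subset hsub
      haveI := hlf v₀
      exact Set.Finite.insert v₀ (Set.toFinite _)
    have hStop : Subgroup.closure S = ⊤ := by
      rw [eq_top_iff]
      intro g _
      have key : ∀ (u y : V) (w : G.Walk u y) (gg kk : Γ), gg • v₀ = u → kk • v₀ = y →
          kk ∈ Subgroup.closure S → gg ∈ Subgroup.closure S := by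
        intro u y w
        induction w with
        | nil =>
          intro gg kk hgg hkk hkmem
          have hmem : kk⁻¹ * gg ∈ S :=
            Or.inl (by rw [mul_smul, hgg, ← hkk, inv_smul_smul])
          have := mul_mem hkmem (Subgroup.subset_closure hmem)
          simpa using this
        | @cons a b c hadj p ih =>
          intro gg kk hgg hkk hkmem
          obtain ⟨k, hk⟩ := htrans v₀ b
          have hkcl : k ∈ Subgroup.closure S := ih k kk hk hkk hkmem
          have hmem : k⁻¹ * gg ∈ S := by
            refine Or.inr ?_
            have h1 : G.Adj (k • v₀) (gg • v₀) := by
              rw [hk, hgg]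
              exact hadj.symm
            have h2 : G.Adj (k⁻¹ • (k • v₀)) (k⁻¹ • (gg • v₀)) := (haut k⁻¹ _ _).2 h1
            rw [inv_smul_smul, ← mul_smul] at h2
            exact h2
          have := mul_mem hkcl (Subgroup.subset_closure hmem)
          simpa using this
      obtain ⟨w⟩ := hconn.preconnected (g • v₀) v₀
      exact key _ _ w g 1 rfl (one_smul _ v₀) (one_mem _)
    exact Group.fg_iff.2 ⟨S, hStop, hSfin⟩
  haveI := hΓfg
  haveI : N.FiniteIndex := hNfi
  obtain ⟨F_N, hFfin, hFtor⟩ := PercAux.torsion_in_finite_subgroup' ↥N inferInstance hNnilp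
  have hsubtor : ∀ (g : Γ) (hgN : g ∈ N), IsOfFinOrder g → IsOfFinOrder (⟨g, hgN⟩ : ↥N) := by
    intro g hgN hg
    obtain ⟨n, hn, hpow⟩ := isOfFinOrder_iff_pow_eq_one.1 hg
    exact isOfFinOrder_iff_pow_eq_one.2 ⟨n, hn, Subtype.ext (by simpa using hpow)⟩
  set TN : Set Γ := {g : Γ | g ∈ N ∧ IsOfFinOrder g} with hTN
  set H : Subgroup Γ := Subgroup.closure TN with hHdef
  have hTNH : TN ⊆ (H : Set Γ) := Subgroup.subset_closure
  have hHle : H ≤ Subgroup.map N.subtype F_N := by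
    rw [hHdef, Subgroup.closure_le]
    rintro g ⟨hgN, hgtor⟩
    exact ⟨⟨g, hgN⟩, hFtor _ (hsubtor g hgN hgtor), rfl⟩
  have hHfin : (H : Set Γ).Finite := by
    refine Set.Finite.subset ?_ hHle
    rw [Subgroup.coe_map]
    exact hFfin.image _
  have hHN : H ≤ N := by
    rw [hHdef, Subgroup.closure_le]
    rintro g ⟨hgN, _⟩
    exact hgN
  have hHnormal : H.Normal := by
    rw [hHdef]
    refine PercAux.closure_normal_of_conj ?_
    rintro g s ⟨hsN, hstor⟩
    refine ⟨hNnormal.conj_mem s hsN g, ?_⟩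
    exact ((MulAut.conj g).toMonoidHom).isOfFinOrder hstor
  have horb : ∀ a b : V,
      Quotient.mk (MulAction.orbitRel H V) a = Quotient.mk (MulAction.orbitRel H V) b
        ↔ ∃ h ∈ H, h • b = a := by
    intro a b
    constructor
    · intro h
      have h2 := Quotient.exact h
      obtain ⟨hh, hhv⟩ := MulAction.mem_orbit_iff.1 h2
      exact ⟨(hh : Γ), hh.2, hhv⟩
    · rintro ⟨h, hh, hhv⟩
      exact Quotient.sound (MulAction.mem_orbit_iff.2 ⟨⟨h, hh⟩, hhv⟩)
  set K : Subgroup Γ := actionKernel V Γ H with hKdef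
  have hmemK : ∀ g : Γ, g ∈ K ↔ ∀ v : V,
      Quotient.mk (MulAction.orbitRel H V) (g • v) = Quotient.mk (MulAction.orbitRel H V) v :=
    fun g => Iff.rfl
  have hHK : H ≤ K := by
    intro h hh
    rw [hmemK]
    intro v
    exact (horb _ _).2 ⟨h, hh, rfl⟩
  have hKnormal : K.Normal := by
    constructor
    intro k hk g
    rw [hmemK]
    intro v
    obtain ⟨h, hh, hhv⟩ := (horb _ _).1 ((hmemK k).1 hk (g⁻¹ • v))
    refine (horb _ _).2 ⟨g * h * g⁻¹, hHnormal.conj_mem h hh g, ?_⟩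
    show (g * h * g⁻¹) • v = (g * k * g⁻¹) • v
    simp only [mul_smul]
    rw [hhv]
  haveI := hKnormal
  refine ⟨H, hHnormal, hHfin, hKnormal, ?_⟩
  intro x hx hrep
  obtain ⟨n, hnN, hmk⟩ := hx
  obtain ⟨g, hg, v, hv⟩ := hrep
  have hng : n⁻¹ * g ∈ K := QuotientGroup.eq.1 (hmk.trans hg.symm)
  obtain ⟨h₀, hh₀, hh₀v⟩ := (horb _ _).1 hv
  obtain ⟨h₁, hh₁, hh₁v⟩ := (horb _ _).1 ((hmemK _).1 hng v)
  set s : Γ := h₀⁻¹ * (n * h₁) with hsdef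
  have hsv : s • v = v := by
    have e1 : n • ((n⁻¹ * g) • v) = g • v := by
      rw [← mul_smul, mul_inv_cancel_left]
    calc s • v = h₀⁻¹ • (n • (h₁ • v)) := by simp only [hsdef, mul_smul]
      _ = h₀⁻¹ • (n • ((n⁻¹ * g) • v)) := by rw [hh₁v]
      _ = h₀⁻¹ • (g • v) := by rw [e1]
      _ = h₀⁻¹ • (h₀ • v) := by rw [← hh₀v]
      _ = v := inv_smul_smul h₀ v
  have hsN : s ∈ N := mul_mem (inv_mem (hHN hh₀)) (mul_mem hnN (hHN hh₁))
  have hstor : IsOfFinOrder s := by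
    by_contra hcon
    have hinj := injective_pow_iff_not_isOfFinOrder.2 hcon
    have hfix : ∀ j : ℕ, (s ^ j) • v = v := by
      intro j
      induction j with
      | zero => rw [pow_zero, one_smul]
      | succ j ihj => rw [pow_succ, mul_smul, hsv, ihj]
    have hransub : Set.range (fun j : ℕ => s ^ j) ⊆ {γ : Γ | γ • v = v} := by
      rintro _ ⟨j, rfl⟩
      exact hfix j
    exact ((hstab v).subset hransub).not_infinite (Set.infinite_range_of_injective hinj)
  have hsH : s ∈ H := hTNH ⟨hsN, hstor⟩
  have hnH : n ∈ H := by
    have hne : n = h₀ * s * h₁⁻¹ := by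
      rw [hsdef]
      group
    rw [hne]
    exact mul_mem (mul_mem hh₀ hsH) (inv_mem hh₁)
  have hgK : g ∈ K := by
    have hge : g = n * (n⁻¹ * g) := by group
    rw [hge]
    exact mul_mem (hHK hnH) hng
  rw [← hg]
  exact (QuotientGroup.eq_one_iff g).2 hgK


end PercStmt
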